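/- Let I be an irreducible interval of a MinBudget instance (N, ⊴, c). Then every ideal J ⊆ I of the restricted order ⊴_I satisfies c(J) ≥ min{0, c(I)}. -/

import Mathlib

open List

variable {ι : Type*} [DecidableEq ι]

/-- Total cost of a schedule (list of jobs). -/
def listCost (c : ι → ℝ) (S : List ι) : ℝ := (S.map c).sum

/-- Budget of a schedule: maximum cost of a prefix (the empty prefix has cost 0). -/
def listBudget (c : ι → ℝ) : List ι → ℝ
  | [] => 0
  | j :: t => max 0 (c j + listBudget c t)

/-- Return of a schedule. -/
def listReturn (c : ι → ℝ) (S : List ι) : ℝ := listCost c S - listBudget c S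

/-- `S` enumerates the finite job set `N` without repetition. -/
def IsScheduleOf (N : Finset ι) (S : List ι) : Prop :=
  S.Nodup ∧ ∀ j, j ∈ S ↔ j ∈ N

/-- `S` is a linear extension of the precedence relation `r` (restricted to its jobs). -/
def RespectsOrder (r : ι → ι → Prop) (S : List ι) : Prop :=
  ∀ i j, r i j → i ∈ S → j ∈ S → S.idxOf i ≤ S.idxOf j

/-- Minimum budget over all feasible schedules of the job set `X`. -/
noncomputable def setBudget (r : ι → ι → Prop) (c : ι → ℝ) (X : Finset ι) : ℝ :=
  sInf {b | ∃ S : List ι, IsScheduleOf X S ∧ RespectsOrder r S ∧ listBudget c S = b}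

/-- Total cost of a job set. -/
def setCost (c : ι → ℝ) (X : Finset ι) : ℝ := ∑ j ∈ X, c j

/-- Return of a job set. -/
noncomputable def setReturn (r : ι → ι → Prop) (c : ι → ℝ) (X : Finset ι) : ℝ :=
  setCost c X - setBudget r c X

/-- The cbr-preorder on job sets. -/
def cbrLE (r : ι → ι → Prop) (c : ι → ℝ) (X Y : Finset ι) : Prop :=
  (setCost c X < 0 ∧ 0 ≤ setCost c Y) ∨
  (setCost c X < 0 ∧ setCost c Y < 0 ∧ setBudget r c X < setBudget r c Y) ∨
  (setCost c X < 0 ∧ setCost c Y < 0 ∧ setBudget r c X = setBudget r c Y ∧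
    setReturn r c X ≤ setReturn r c Y) ∨
  (0 ≤ setCost c X ∧ 0 ≤ setCost c Y ∧ setReturn r c X ≤ setReturn r c Y)

/-- `J` is an ideal (downward-closed subset) of `r` restricted to `I`. -/
def IsIdealIn (r : ι → ι → Prop) (I J : Finset ι) : Prop :=
  J ⊆ I ∧ ∀ j ∈ J, ∀ i ∈ I, r i j → i ∈ J

/-- `F` is a filter (upward-closed subset) of `r` restricted to `I`. -/
def IsFilterIn (r : ι → ι → Prop) (I F : Finset ι) : Prop :=
  F ⊆ I ∧ ∀ i ∈ F, ∀ j ∈ I, r i j → j ∈ F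

/-- `I` is an interval of `r` on `N`: intersection of an ideal and a filter. -/
def IsIntervalIn (r : ι → ι → Prop) (N I : Finset ι) : Prop :=
  ∃ J F, IsIdealIn r N J ∧ IsFilterIn r N F ∧ I = J ∩ F

/-- An irreducible interval: every ideal of the restricted order is `⪰` the interval. -/
def IsIrreducibleIn (r : ι → ι → Prop) (c : ι → ℝ) (N I : Finset ι) : Prop :=
  IsIntervalIn r N I ∧ ∀ J, IsIdealIn r I J → cbrLE r c I J

/-- A schedule (given as blocks `SS`) in increasing irreducible structure. -/
def IncIrrStructure (r : ι → ι → Prop) (c : ι → ℝ) (N : Finset ι)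
    (SS : List (List ι)) : Prop :=
  IsScheduleOf N SS.flatten ∧ RespectsOrder r SS.flatten ∧
  (∀ S ∈ SS, IsIrreducibleIn r c N S.toFinset ∧ RespectsOrder r S ∧
    listBudget c S = setBudget r c S.toFinset) ∧
  ∀ i j : Fin SS.length, i < j → cbrLE r c (SS.get i).toFinset (SS.get j).toFinset



set_option linter.unusedSectionVars false

lemma listCost_nil (c : ι → ℝ) : listCost c [] = 0 := rfl
lemma listCost_cons (c : ι → ℝ) (x : ι) (t : List ι) :
    listCost c (x :: t) = c x + listCost c t := by simp [listCost]

lemma listBudget_nonneg (c : ι → ℝ) (S : List ι) : 0 ≤ listBudget c S := by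
  cases S <;> simp [listBudget]

lemma prefix_cost_le_budget (c : ι → ℝ) {P S : List ι} (h : P <+: S) :
    listCost c P ≤ listBudget c S := by
  induction S generalizing P with
  | nil => simp [List.prefix_nil.mp h, listCost, listBudget]
  | cons x t ih =>
    obtain ⟨u, hu⟩ := h
    cases P with
    | nil => simpa [listCost] using listBudget_nonneg c (x :: t)
    | cons y P' =>
      injection hu with h1 h2
      subst h1
      have hP : P' <+: t := ⟨u, h2⟩
      have := ih hP
      simp only [listBudget, listCost_cons]
      have : c y + listCost c P' ≤ c y + listBudget c t := by linarith
      exact le_max_of_le_right this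

lemma listBudget_le_of (c : ι → ℝ) {S : List ι} {B : ℝ} (h0 : 0 ≤ B)
    (h : ∀ P, P <+: S → listCost c P ≤ B) : listBudget c S ≤ B := by
  induction S generalizing B with
  | nil => simpa [listBudget]
  | cons x t ih =>
    have hx : c x ≤ B := by simpa [listCost] using h [x] ⟨t, rfl⟩
    have hB' : listBudget c t ≤ B - c x := by
      refine ih (by linarith) ?_
      intro P hP
      have := h (x :: P) ((prefix_cons_inj x).mpr hP)
      rw [listCost_cons] at this
      linarith
    simp only [listBudget]
    refine max_le h0 (by linarith)

lemma prefix_filter {p : ι → Bool} {P S : List ι} (h : P <+: S.filter p) :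
    ∃ Q, Q <+: S ∧ P = Q.filter p := by
  induction S generalizing P with
  | nil => exact ⟨[], prefix_refl _, by simpa using List.prefix_nil.mp h⟩
  | cons x t ih =>
    by_cases hp : p x
    · rw [List.filter_cons_of_pos hp] at h
      obtain ⟨u, hu⟩ := h
      cases P with
      | nil => exact ⟨[], ⟨x :: t, rfl⟩, rfl⟩
      | cons y P' =>
        injection hu with h1 h2
        subst h1
        obtain ⟨Q', hQ', hPQ⟩ := ih ⟨u, h2⟩
        exact ⟨y :: Q', (prefix_cons_inj y).mpr hQ', by
          rw [List.filter_cons_of_pos hp, hPQ]⟩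
    · rw [List.filter_cons_of_neg (by simpa using hp)] at h
      obtain ⟨Q', hQ', hPQ⟩ := ih h
      exact ⟨x :: Q', (prefix_cons_inj x).mpr hQ', by
        rwa [List.filter_cons_of_neg (by simpa using hp)]⟩

lemma indexOf_filter_le {p : ι → Bool} {S : List ι} (hS : S.Nodup) {a b : ι}
    (ha : a ∈ S.filter p) (hb : b ∈ S.filter p)
    (h : S.idxOf a ≤ S.idxOf b) :
    (S.filter p).idxOf a ≤ (S.filter p).idxOf b := by
  induction S with
  | nil => simp at ha
  | cons x t ih =>
    have hxnt : x ∉ t := (List.nodup_cons.mp hS).1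
    have htn : t.Nodup := (List.nodup_cons.mp hS).2
    by_cases hp : p x
    · rw [List.filter_cons_of_pos hp] at ha hb ⊢
      by_cases hax : a = x
      · subst hax; simp [List.idxOf_cons_self]
      · have ha' : a ∈ t.filter p := by
          rcases List.mem_cons.mp ha with h1 | h1
          · exact absurd h1 hax
          · exact h1
        by_cases hbx : b = x
        · subst hbx
          rw [List.idxOf_cons_self] at h
          rw [List.idxOf_cons_ne _ (Ne.symm hax)] at h
          omega
        · have hb' : b ∈ t.filter p := by
            rcases List.mem_cons.mp hb with h1 | h1
            · exact absurd h1 hbx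
            · exact h1
          rw [List.idxOf_cons_ne _ (Ne.symm hax),
            List.idxOf_cons_ne _ (Ne.symm hbx)] at h ⊢
          exact Nat.succ_le_succ (ih htn ha' hb' (Nat.le_of_succ_le_succ h))
    · rw [List.filter_cons_of_neg (by simpa using hp)] at ha hb ⊢
      have hat : a ∈ t := (List.mem_filter.mp ha).1
      have hbt : b ∈ t := (List.mem_filter.mp hb).1
      have hax : a ≠ x := fun e => hxnt (e ▸ hat)
      have hbx : b ≠ x := fun e => hxnt (e ▸ hbt)
      rw [List.idxOf_cons_ne _ (Ne.symm hax),
        List.idxOf_cons_ne _ (Ne.symm hbx)] at h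
      exact ih htn ha hb (Nat.le_of_succ_le_succ h)

lemma respectsOrder_filter {r : ι → ι → Prop} {S : List ι} (hS : S.Nodup)
    (h : RespectsOrder r S) (p : ι → Bool) : RespectsOrder r (S.filter p) := by
  intro i j hij hi hj
  exact indexOf_filter_le hS hi hj
    (h i j hij (List.mem_filter.mp hi).1 (List.mem_filter.mp hj).1)

lemma exists_min_elt {r : ι → ι → Prop} (hr : IsPartialOrder ι r) (X : Finset ι)
    (hX : X.Nonempty) : ∃ x ∈ X, ∀ y ∈ X, r y x → y = x := by
  classical
  induction X using Finset.strongInduction with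
  | _ X ih =>
    obtain ⟨a, ha⟩ := hX
    set X' := X.filter (fun y => r y a ∧ y ≠ a) with hX'def
    by_cases hX' : X'.Nonempty
    · have hss : X' ⊂ X := by
        refine Finset.ssubset_iff_of_subset (Finset.filter_subset _ _) |>.mpr ?_
        exact ⟨a, ha, by simp [hX'def]⟩
      obtain ⟨x, hx, hmin⟩ := ih X' hss hX'
      have hx' := Finset.mem_filter.mp hx
      refine ⟨x, hx'.1, ?_⟩
      intro y hy hyx
      have hrya : r y a := hr.toIsPreorder.toIsTrans.trans _ _ _ hyx hx'.2.1
      by_cases hya : y = a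
      · subst hya
        exact absurd (hr.toAntisymm.antisymm _ _ hyx hx'.2.1).symm hx'.2.2
      · exact hmin y (Finset.mem_filter.mpr ⟨hy, hrya, hya⟩) hyx
    · refine ⟨a, ha, ?_⟩
      intro y hy hya
      by_contra hne
      exact hX' ⟨y, Finset.mem_filter.mpr ⟨hy, hya, hne⟩⟩

lemma exists_schedule {r : ι → ι → Prop} (hr : IsPartialOrder ι r) (X : Finset ι) :
    ∃ S, IsScheduleOf X S ∧ RespectsOrder r S := by
  classical
  induction X using Finset.strongInduction with
  | _ X ih =>
    rcases X.eq_empty_or_nonempty with rfl | hX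
    · exact ⟨[], ⟨List.nodup_nil, by simp⟩, fun i j _ hi _ => absurd hi (by simp)⟩
    · obtain ⟨x, hx, hmin⟩ := exists_min_elt hr X hX
      obtain ⟨S', ⟨hnd, hmem⟩, hord⟩ := ih (X.erase x) (Finset.erase_ssubset hx)
      have hxS' : x ∉ S' := fun h => by simpa using (hmem x).mp h
      refine ⟨x :: S', ⟨List.nodup_cons.mpr ⟨hxS', hnd⟩, ?_⟩, ?_⟩
      · intro j
        simp only [List.mem_cons, hmem, Finset.mem_erase]
        constructor
        · rintro (rfl | ⟨_, hj⟩) <;> [exact hx; exact hj]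
        · intro hj
          by_cases hjx : j = x
          · exact Or.inl hjx
          · exact Or.inr ⟨hjx, hj⟩
      · intro i j hij hi hj
        by_cases hix : i = x
        · subst hix; simp [List.idxOf_cons_self]
        · have hiS : i ∈ S' := by
            rcases List.mem_cons.mp hi with h1 | h1
            · exact absurd h1 hix
            · exact h1
          have hiX : i ∈ X := (Finset.mem_erase.mp ((hmem i).mp hiS)).2
          by_cases hjx : j = x
          · subst hjx
            exact absurd (hmin i hiX hij) hix
          · have hjS : j ∈ S' := by
              rcases List.mem_cons.mp hj with h1 | h1
              · exact absurd h1 hjx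
              · exact h1
            rw [List.idxOf_cons_ne _ (Ne.symm hix),
              List.idxOf_cons_ne _ (Ne.symm hjx)]
            exact Nat.succ_le_succ (hord i j hij hiS hjS)

lemma setBudget_bddBelow (r : ι → ι → Prop) (c : ι → ℝ) (X : Finset ι) :
    BddBelow {b | ∃ S : List ι, IsScheduleOf X S ∧ RespectsOrder r S ∧ listBudget c S = b} := by
  refine ⟨0, ?_⟩
  rintro b ⟨S, _, _, rfl⟩
  exact listBudget_nonneg c S

lemma exists_optimal {r : ι → ι → Prop} (hr : IsPartialOrder ι r) (c : ι → ℝ)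
    (X : Finset ι) :
    ∃ S, IsScheduleOf X S ∧ RespectsOrder r S ∧ listBudget c S = setBudget r c X := by
  classical
  set B := {b | ∃ S : List ι, IsScheduleOf X S ∧ RespectsOrder r S ∧ listBudget c S = b}
    with hBdef
  have hne : B.Nonempty := by
    obtain ⟨S, h1, h2⟩ := exists_schedule hr X
    exact ⟨listBudget c S, S, h1, h2, rfl⟩
  have hfin : B.Finite := by
    refine Set.Finite.subset (List.finite_toSet (X.toList.permutations.map (listBudget c))) ?_
    rintro b ⟨S, ⟨hnd, hmem⟩, _, rfl⟩
    simp only [Set.mem_setOf_eq, List.mem_map]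
    refine ⟨S, ?_, rfl⟩
    rw [List.mem_permutations]
    exact (List.perm_ext_iff_of_nodup hnd X.nodup_toList).mpr
      (fun a => (hmem a).trans (Finset.mem_toList).symm)
  have h := hne.csInf_mem hfin
  obtain ⟨S, h1, h2, h3⟩ := h
  exact ⟨S, h1, h2, h3⟩

lemma indexOf_eq_of_prefix {Q S : List ι} (h : Q <+: S) {a : ι} (ha : a ∈ Q) :
    S.idxOf a = Q.idxOf a := by
  induction Q generalizing S with
  | nil => simp at ha
  | cons x Q' ih =>
    obtain ⟨u, hu⟩ := h
    subst hu
    by_cases hax : a = x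
    · subst hax; simp [List.idxOf_cons_self]
    · have ha' : a ∈ Q' := by
        rcases List.mem_cons.mp ha with h1 | h1
        · exact absurd h1 hax
        · exact h1
      rw [List.cons_append, List.idxOf_cons_ne _ (Ne.symm hax),
        List.idxOf_cons_ne _ (Ne.symm hax), ih ⟨u, rfl⟩ ha']

lemma indexOf_ge_of_not_mem {Q u : List ι} {a : ι} (ha : a ∉ Q) :
    Q.length ≤ (Q ++ u).idxOf a := by
  induction Q with
  | nil => simp
  | cons x Q' ih =>
    have hax : a ≠ x := fun e => ha (e ▸ List.mem_cons_self (a := x) (l := Q'))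
    rw [List.cons_append, List.idxOf_cons_ne _ (Ne.symm hax)]
    exact Nat.succ_le_succ (ih (fun h => ha (List.mem_cons_of_mem x h)))

lemma mem_prefix_of_indexOf_lt {Q S : List ι} (h : Q <+: S) {a : ι}
    (haS : a ∈ S) (hlt : S.idxOf a < Q.length) : a ∈ Q := by
  by_contra haQ
  obtain ⟨u, rfl⟩ := h
  exact absurd hlt (not_lt.mpr (indexOf_ge_of_not_mem haQ))

lemma prefix_toFinset_ideal {r : ι → ι → Prop} {I : Finset ι} {S Q : List ι}
    (hS : IsScheduleOf I S) (hro : RespectsOrder r S) (hQ : Q <+: S) :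
    IsIdealIn r I Q.toFinset := by
  constructor
  · intro a ha
    exact (hS.2 a).mp (hQ.subset (List.mem_toFinset.mp ha))
  · intro j hj i hi hij
    have hjQ : j ∈ Q := List.mem_toFinset.mp hj
    have hjS : j ∈ S := hQ.subset hjQ
    have hiS : i ∈ S := (hS.2 i).mpr hi
    have h1 : S.idxOf i ≤ S.idxOf j := hro i j hij hiS hjS
    have h2 : S.idxOf j < Q.length := by
      rw [indexOf_eq_of_prefix hQ hjQ]
      exact List.idxOf_lt_length_iff.mpr hjQ
    exact List.mem_toFinset.mpr (mem_prefix_of_indexOf_lt hQ hiS (lt_of_le_of_lt h1 h2))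

lemma ideal_union {r : ι → ι → Prop} {I A B : Finset ι} (hA : IsIdealIn r I A)
    (hB : IsIdealIn r I B) : IsIdealIn r I (A ∪ B) := by
  refine ⟨Finset.union_subset hA.1 hB.1, ?_⟩
  intro j hj i hi hij
  rcases Finset.mem_union.mp hj with h | h
  · exact Finset.mem_union_left _ (hA.2 j h i hi hij)
  · exact Finset.mem_union_right _ (hB.2 j h i hi hij)

theorem irreducible_ideal_cost (r : ι → ι → Prop) (hr : IsPartialOrder ι r)
    (c : ι → ℝ) (N I : Finset ι) (hI : IsIrreducibleIn r c N I) :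
    ∀ J, IsIdealIn r I J → min 0 (setCost c I) ≤ setCost c J := by
  classical
  intro J hJ
  by_cases hcI : setCost c I < 0
  · -- min is c(I); show c(I) ≤ c(J) using a minimal-cost ideal K
    rw [min_eq_right hcI.le]
    -- minimal-cost ideal K
    obtain ⟨K, hKmem, hKmin⟩ :=
      Finset.exists_min_image (I.powerset.filter (fun J => IsIdealIn r I J)) (setCost c)
        ⟨∅, Finset.mem_filter.mpr ⟨Finset.mem_powerset.mpr (Finset.empty_subset I),
          Finset.empty_subset I, by simp⟩⟩
    have hKideal : IsIdealIn r I K := (Finset.mem_filter.mp hKmem).2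
    have hKJ : setCost c K ≤ setCost c J :=
      hKmin J (Finset.mem_filter.mpr ⟨Finset.mem_powerset.mpr hJ.1, hJ⟩)
    -- it suffices to show c(I) ≤ c(K)
    refine le_trans ?_ hKJ
    by_contra hlt
    push_neg at hlt
    -- c(K) < c(I) < 0
    obtain ⟨S, hSsch, hSord, hSbud⟩ := exists_optimal hr c I
    set T := S.filter (fun a => a ∈ K) with hTdef
    have hTsch : IsScheduleOf K T := by
      constructor
      · exact hSsch.1.filter _
      · intro j
        simp only [hTdef, List.mem_filter, decide_eq_true_eq]
        constructor
        · exact fun h => h.2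
        · exact fun h => ⟨(hSsch.2 j).mpr (hKideal.1 h), h⟩
    have hTord : RespectsOrder r T := respectsOrder_filter hSsch.1 hSord _
    -- budget of T is at most budget of S
    have hTbud : listBudget c T ≤ listBudget c S := by
      refine listBudget_le_of c (listBudget_nonneg c S) ?_
      intro P hP
      obtain ⟨Q, hQS, rfl⟩ := prefix_filter hP
      have hQnd : Q.Nodup := hSsch.1.sublist hQS.sublist
      have hQfil : (Q.filter (fun a => a ∈ K)).toFinset = Q.toFinset ∩ K := by
        ext a
        simp [List.mem_toFinset, List.mem_filter]
      have hcostP : listCost c (Q.filter (fun a => a ∈ K)) =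
          setCost c (Q.toFinset ∩ K) := by
        rw [← hQfil]
        exact (List.sum_toFinset c (hQnd.filter _)).symm
      have hcostQ : listCost c Q = setCost c Q.toFinset :=
        (List.sum_toFinset c hQnd).symm
      -- Q.toFinset ∪ K is an ideal, so its cost is at least c(K)
      have hQideal : IsIdealIn r I Q.toFinset := prefix_toFinset_ideal hSsch hSord hQS
      have hUideal : IsIdealIn r I (Q.toFinset ∪ K) := ideal_union hQideal hKideal
      have hU : setCost c K ≤ setCost c (Q.toFinset ∪ K) :=
        hKmin _ (Finset.mem_filter.mpr ⟨Finset.mem_powerset.mpr hUideal.1, hUideal⟩)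
      have hmod : setCost c (Q.toFinset ∪ K) + setCost c (Q.toFinset ∩ K) =
          setCost c Q.toFinset + setCost c K := Finset.sum_union_inter
      have h1 : setCost c (Q.toFinset ∩ K) ≤ setCost c Q.toFinset := by linarith
      calc listCost c (Q.filter (fun a => a ∈ K)) = setCost c (Q.toFinset ∩ K) := hcostP
        _ ≤ setCost c Q.toFinset := h1
        _ = listCost c Q := hcostQ.symm
        _ ≤ listBudget c S := prefix_cost_le_budget c hQS
    have hbK : setBudget r c K ≤ setBudget r c I := by
      rw [← hSbud]
      exact le_trans (csInf_le (setBudget_bddBelow r c K) ⟨T, hTsch, hTord, rfl⟩) hTbud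
    have hcbr := hI.2 K hKideal
    have hcK : setCost c K < 0 := lt_trans hlt hcI
    rcases hcbr with ⟨_, h⟩ | ⟨_, _, h⟩ | ⟨_, _, hb, hR⟩ | ⟨h, _⟩
    · linarith
    · linarith
    · simp only [setReturn] at hR; linarith
    · linarith
  · -- c(I) ≥ 0: the cbr comparison directly gives 0 ≤ c(J)
    push_neg at hcI
    rw [min_eq_left hcI]
    rcases hI.2 J hJ with ⟨h, _⟩ | ⟨h, _⟩ | ⟨h, _⟩ | ⟨_, h, _⟩
    · linarith
    · linarith
    · linarith
    · exact h
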